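/- Assume the action space 𝒜 is finite and fix γ > 0. For any pair (δ̃, R̃) satisfying E_P[max(L(δ̃(Y), θ)/R̃(Y), 1)] ≤ 1 + γ for all (θ, P) ∈ 𝓜, there exists a family of e-variables E(·, θ) such that, setting E_γ(Y, θ) = γ·E(Y, θ) + 1 and R(Y) = min_{a ∈ 𝒜} sup_{θ ∈ Θ} L(a, θ)/E_γ(Y, θ) with δ(Y) attaining this minimum, one has R(Y) ≤ R̃(Y) for all Y; in particular (δ, R) weakly dominates (δ̃, R̃). -/

import Mathlib

open MeasureTheory Set
open scoped ENNReal

/-- Proposition (`truncated`, second part): with `𝒜` finite and `γ > 0`, for any pair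
`(δ̃, R̃)` with `E_P[max(L(δ̃(Y),θ)/R̃(Y), 1)] ≤ 1 + γ` for all `(θ,P) ∈ M`, there is a
family of e-variables `E(·,θ)` such that, with `E_γ(Y,θ) = γ·E(Y,θ) + 1`,
`R(Y) = min_{a ∈ 𝒜} sup_θ L(a,θ)/E_γ(Y,θ)` and `δ(Y)` attaining this minimum, one has
`R(Y) ≤ R̃(Y)` for all `Y`; in particular `(δ, R)` weakly dominates `(δ̃, R̃)`. -/
theorem statement13
    {Y : Type*} [MeasurableSpace Y] {A : Type*} [Fintype A] [Nonempty A] {Θ : Type*}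
    (L : A → Θ → ℝ≥0∞) (hLpos : ∀ a θ, 0 < L a θ) (hLfin : ∀ a θ, L a θ < ⊤)
    (M : Set (Θ × Measure Y))
    (hMprob : ∀ p ∈ M, IsProbabilityMeasure p.2)
    (γ : ℝ) (hγ : 0 < γ)
    (δt : Y → A) (Rt : Y → ℝ≥0∞)
    (hcert : ∀ p ∈ M,
      ∫⁻ y, max (L (δt y) p.1 / Rt y) 1 ∂p.2 ≤ 1 + ENNReal.ofReal γ) :
    ∃ Evar : Y → Θ → ℝ≥0∞,
      -- each `E(·, θ)` is an e-variable against `θ`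
      (∀ θ : Θ, ∀ P : Measure Y, (θ, P) ∈ M → ∫⁻ y, Evar y θ ∂P ≤ 1) ∧
      ∃ δ : Y → A,
        -- `δ(Y)` attains the minimum defining `R(Y)`
        (∀ y, (⨆ θ : Θ, L (δ y) θ / (ENNReal.ofReal γ * Evar y θ + 1))
            = ⨅ a : A, ⨆ θ : Θ, L a θ / (ENNReal.ofReal γ * Evar y θ + 1)) ∧
        -- `R(Y) ≤ R̃(Y)` pointwise ...
        (∀ y, (⨅ a : A, ⨆ θ : Θ, L a θ / (ENNReal.ofReal γ * Evar y θ + 1)) ≤ Rt y) ∧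
        -- ... hence `(δ, R)` weakly dominates `(δ̃, R̃)`
        (∀ p ∈ M, ∀ r : ℝ≥0∞,
          p.2 {y | r ≤ ⨅ a : A, ⨆ θ : Θ, L a θ / (ENNReal.ofReal γ * Evar y θ + 1)}
            ≤ p.2 {y | r ≤ Rt y}) := by
  set c := ENNReal.ofReal γ with hc
  have hc0 : c ≠ 0 := by simp [hc, ENNReal.ofReal_eq_zero, not_le, hγ]
  have hct : c ≠ ⊤ := ENNReal.ofReal_ne_top
  set m : Y → Θ → ℝ≥0∞ := fun y θ => max (L (δt y) θ / Rt y) 1 with hm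
  refine ⟨fun y θ => (m y θ - 1) / c, ?_, ?_⟩
  · intro θ P hP
    have hprob : IsProbabilityMeasure P := hMprob (θ, P) hP
    have h1 : ∫⁻ y, (m y θ - 1) ∂P + 1 ≤ ENNReal.ofReal γ + 1 := by
      have := hcert (θ, P) hP
      calc ∫⁻ y, (m y θ - 1) ∂P + 1
          = ∫⁻ y, ((m y θ - 1) + 1) ∂P := by
            simp [lintegral_add_right _ measurable_const]
        _ = ∫⁻ y, m y θ ∂P := by
            congr 1; funext y
            exact tsub_add_cancel_of_le (le_max_right _ _)
        _ ≤ 1 + ENNReal.ofReal γ := this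
        _ = ENNReal.ofReal γ + 1 := add_comm _ _
    have h2 : ∫⁻ y, (m y θ - 1) ∂P ≤ c :=
      (ENNReal.add_le_add_iff_right ENNReal.one_ne_top).mp h1
    calc ∫⁻ y, (m y θ - 1) / c ∂P
        = ∫⁻ y, c⁻¹ * (m y θ - 1) ∂P := by
          congr 1; funext y; rw [div_eq_mul_inv, mul_comm]
      _ = c⁻¹ * ∫⁻ y, (m y θ - 1) ∂P := lintegral_const_mul' _ _ (ENNReal.inv_ne_top.mpr hc0)
      _ ≤ c⁻¹ * c := mul_le_mul_right h2 _
      _ = 1 := ENNReal.inv_mul_cancel hc0 hct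
  · have key : ∀ y θ, c * ((m y θ - 1) / c) + 1 = m y θ := by
      intro y θ
      rw [ENNReal.mul_div_cancel hc0 hct, tsub_add_cancel_of_le (le_max_right _ _)]
    have hRle : ∀ y, (⨅ a : A, ⨆ θ : Θ, L a θ / (c * ((m y θ - 1) / c) + 1)) ≤ Rt y := by
      intro y
      refine le_trans (iInf_le _ (δt y)) (iSup_le fun θ => ?_)
      rw [key y θ]
      rcases eq_or_ne (Rt y) 0 with h0 | h0
      · have : m y θ = ⊤ := by
          have : L (δt y) θ / Rt y = ⊤ := by
            rw [h0]; exact ENNReal.div_zero (hLpos _ _).ne'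
          simp [hm, this]
        simp [this, h0]
      · rcases eq_or_ne (Rt y) ⊤ with ht | ht
        · simp [ht]
        · refine ENNReal.div_le_of_le_mul ?_
          calc L (δt y) θ = Rt y * (L (δt y) θ / Rt y) :=
                (ENNReal.mul_div_cancel h0 ht).symm
            _ ≤ Rt y * m y θ := mul_le_mul_right (le_max_left _ _) _
    have hex : ∀ y, ∃ a : A,
        (⨆ θ : Θ, L a θ / (c * ((m y θ - 1) / c) + 1))
          = ⨅ a : A, ⨆ θ : Θ, L a θ / (c * ((m y θ - 1) / c) + 1) := by
      intro y
      obtain ⟨a, ha⟩ := Finite.exists_min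
        (fun a : A => ⨆ θ : Θ, L a θ / (c * ((m y θ - 1) / c) + 1))
      exact ⟨a, le_antisymm (le_iInf ha) (iInf_le _ a)⟩
    refine ⟨fun y => (hex y).choose, fun y => (hex y).choose_spec, hRle, ?_⟩
    intro p _ r
    exact measure_mono fun y hy => le_trans hy (hRle y)
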